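/- arXiv:2010.03611 — 2 statements merged into one kernel-verified Lean document; each statement's English description precedes it below -/
import Mathlib

section
/- For every real number x with 0 < x ≤ π/2, cot(x) ≤ 1/x − x/3. -/
open Real

lemma aux_xcos_le_sin (x : ℝ) (hx0 : 0 ≤ x) (hx : x ≤ Real.pi / 2) :
    x * Real.cos x ≤ Real.sin x := by
  rcases eq_or_lt_of_le hx0 with h | h
  · simp [← h]
  rcases eq_or_lt_of_le hx with h2 | h2
  · rw [h2]; simp [Real.cos_pi_div_two, Real.sin_pi_div_two]
  have ht := Real.lt_tan h h2
  have hc : 0 < Real.cos x := Real.cos_pos_of_mem_Ioo ⟨by linarith [Real.pi_pos], h2⟩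
  rw [Real.tan_eq_sin_div_cos, lt_div_iff₀ hc] at ht
  linarith

lemma aux_key (x : ℝ) (hx0 : 0 ≤ x) (hx : x ≤ Real.pi / 2) :
    x * Real.cos x ≤ Real.sin x * (1 - x ^ 2 / 3) := by
  set f : ℝ → ℝ := fun t => Real.sin t * (1 - t ^ 2 / 3) - t * Real.cos t with hf
  have hderiv : ∀ t : ℝ, HasDerivAt f (t / 3 * (Real.sin t - t * Real.cos t)) t := by
    intro t
    have h1 : HasDerivAt (fun t : ℝ => Real.sin t * (1 - t ^ 2 / 3))
        (Real.cos t * (1 - t ^ 2 / 3) + Real.sin t * (-(2 * t) / 3)) t := by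
      have := (Real.hasDerivAt_sin t).mul
        ((((hasDerivAt_id t).pow 2).div_const (3:ℝ)).const_sub 1)
      exact this.congr_deriv (by simp [id]; ring)
    have h2 : HasDerivAt (fun t : ℝ => t * Real.cos t)
        (1 * Real.cos t + t * (-Real.sin t)) t :=
      (hasDerivAt_id t).mul (Real.hasDerivAt_cos t)
    have := h1.sub h2
    exact this.congr_deriv (by ring)
  have hmono : MonotoneOn f (Set.Icc 0 (Real.pi / 2)) := by
    apply monotoneOn_of_deriv_nonneg (convex_Icc _ _)
    · exact Continuous.continuousOn (by continuity)
    · intro t ht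
      exact (hderiv t).differentiableAt.differentiableWithinAt
    · intro t ht
      rw [(hderiv t).deriv]
      simp only [interior_Icc, Set.mem_Ioo] at ht
      have := aux_xcos_le_sin t ht.1.le ht.2.le
      have h3 : 0 ≤ Real.sin t - t * Real.cos t := by linarith
      have h4 : 0 ≤ t / 3 := by linarith
      exact mul_nonneg h4 h3
  have h0 : f 0 = 0 := by simp [hf]
  have := hmono (Set.mem_Icc.mpr ⟨le_refl 0, by linarith [Real.pi_pos]⟩)
    (Set.mem_Icc.mpr ⟨hx0, hx⟩) hx0
  rw [h0] at this
  simp only [hf] at this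
  linarith

theorem cot_le_taylor (x : ℝ) (hx0 : 0 < x) (hx : x ≤ Real.pi / 2) :
    Real.cos x / Real.sin x ≤ 1 / x - x / 3 := by
  have hs : 0 < Real.sin x :=
    Real.sin_pos_of_pos_of_lt_pi hx0 (by linarith [Real.pi_gt_three])
  rw [div_le_iff₀ hs]
  have hkey := aux_key x hx0.le hx
  have hxne : x ≠ 0 := hx0.ne'
  have : Real.cos x ≤ Real.sin x * (1 - x ^ 2 / 3) / x := by
    rw [le_div_iff₀ hx0]; linarith
  calc Real.cos x ≤ Real.sin x * (1 - x ^ 2 / 3) / x := this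
    _ = (1 / x - x / 3) * Real.sin x := by field_simp
end

section
/- For every integer α ≥ 3, α·cot(π/α) ≤ α²/π − π/3. -/
open Real

lemma sin_sub_mul_cos_nonneg' {x : ℝ} (h0 : 0 ≤ x) (h2 : x ≤ π / 2) :
    0 ≤ Real.sin x - x * Real.cos x := by
  rcases eq_or_lt_of_le h0 with rfl | hx
  · simp
  rcases eq_or_lt_of_le h2 with h | hx2
  · rw [h]
    simp [Real.cos_pi_div_two, Real.sin_pi_div_two]
  · have ht := Real.lt_tan hx hx2
    have hc : 0 < Real.cos x := Real.cos_pos_of_mem_Ioo ⟨by linarith [Real.pi_pos], hx2⟩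
    rw [Real.tan_eq_sin_div_cos, lt_div_iff₀ hc] at ht
    nlinarith

lemma key_ineq {x : ℝ} (h0 : 0 ≤ x) (h2 : x ≤ π / 2) :
    x * Real.cos x ≤ (1 - x ^ 2 / 3) * Real.sin x := by
  set f : ℝ → ℝ := fun y => (1 - y ^ 2 / 3) * Real.sin y - y * Real.cos y with hf
  have hder : ∀ y : ℝ, HasDerivAt f (y / 3 * (Real.sin y - y * Real.cos y)) y := by
    intro y
    have h1 : HasDerivAt (fun y : ℝ => 1 - y ^ 2 / 3) (-(2 * y ^ 1 / 3)) y :=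
      ((hasDerivAt_pow 2 y).div_const 3).const_sub 1
    have h2' : HasDerivAt (fun y : ℝ => (1 - y ^ 2 / 3) * Real.sin y)
        (-(2 * y ^ 1 / 3) * Real.sin y + (1 - y ^ 2 / 3) * Real.cos y) y :=
      h1.mul (Real.hasDerivAt_sin y)
    have h3 : HasDerivAt (fun y : ℝ => y * Real.cos y)
        (1 * Real.cos y + y * (-Real.sin y)) y :=
      (hasDerivAt_id y).mul (Real.hasDerivAt_cos y)
    have := h2'.sub h3
    refine this.congr_deriv ?_
    ring
  have hmono : MonotoneOn f (Set.Icc 0 (π / 2)) := by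
    apply monotoneOn_of_deriv_nonneg (convex_Icc 0 (π / 2))
    · exact (Continuous.continuousOn (by continuity))
    · intro y _
      exact (hder y).differentiableAt.differentiableWithinAt
    · intro y hy
      rw [interior_Icc] at hy
      rw [(hder y).deriv]
      have h4 := sin_sub_mul_cos_nonneg' hy.1.le hy.2.le
      have := hy.1
      positivity
  have hle := hmono (Set.mem_Icc.mpr ⟨le_refl 0, by linarith [Real.pi_pos]⟩)
    (Set.mem_Icc.mpr ⟨h0, h2⟩) h0
  simp only [hf] at hle
  simp at hle
  linarith

theorem alpha_cot_even_bound (α : ℤ) (hα : 3 ≤ α) :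
    (α : ℝ) * (Real.cos (Real.pi / α) / Real.sin (Real.pi / α)) ≤
      (α : ℝ) ^ 2 / Real.pi - Real.pi / 3 := by
  have hπ := Real.pi_pos
  have hα3 : (3 : ℝ) ≤ (α : ℝ) := by exact_mod_cast hα
  have hαpos : (0 : ℝ) < α := by linarith
  set x : ℝ := π / α with hx
  have hx0 : 0 < x := div_pos hπ hαpos
  have hx3 : x ≤ π / 3 := by
    apply div_le_div_of_nonneg_left hπ.le (by norm_num) hα3
  have hx2 : x ≤ π / 2 := le_trans hx3 (by
    apply div_le_div_of_nonneg_left hπ.le (by norm_num) (by norm_num))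
  have hxπ : x < π := lt_of_le_of_lt hx2 (by linarith)
  have hsin : 0 < Real.sin x := Real.sin_pos_of_pos_of_lt_pi hx0 hxπ
  have hkey := key_ineq hx0.le hx2
  have hdiv : Real.cos x / Real.sin x ≤ (1 - x ^ 2 / 3) / x := by
    rw [div_le_div_iff₀ hsin hx0]
    nlinarith
  have h2 : (α : ℝ) * (Real.cos x / Real.sin x) ≤ (α : ℝ) * ((1 - x ^ 2 / 3) / x) :=
    mul_le_mul_of_nonneg_left hdiv hαpos.le
  have heq : (α : ℝ) * ((1 - x ^ 2 / 3) / x) = (α : ℝ) ^ 2 / π - π / 3 := by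
    rw [hx]
    field_simp
  linarith [h2, heq ▸ h2]
end
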